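/- Local Lipschitz dependence of the posterior density on the measurement (Lemma 4.4): Assume ρ satisfies (N.1)–(N.3) and that L : X → ℝ^d is Borel measurable with ‖L‖_{L²(μ_prior)} < ∞. There exists a constant C > 0, depending only on ρ, such that for all y, y' ∈ ℝ^d: sup_{ū ∈ X} | ρ(y − L(ū))/Z(y) − ρ(y' − L(ū))/Z(y') | ≤ C |y − y'|_Γ exp( |y|_Γ² + |y'|_Γ² + 2‖L‖²_{L²(μ_prior)} ). -/

import Mathlib

open MeasureTheory
open scoped BigOperators ENNReal Matrix

noncomputable section

/-- The Γ-weighted norm `|y|_Γ = sqrt ⟨y, Γ⁻¹ y⟩` on `ℝ^d`. -/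
def gammaNorm {d : ℕ} (Γ : Matrix (Fin d) (Fin d) ℝ) (y : Fin d → ℝ) : ℝ :=
  Real.sqrt (y ⬝ᵥ (Γ⁻¹).mulVec y)

/-- A noise density satisfying (N.1)–(N.3). -/
structure IsNoiseDensity {d : ℕ} (Γ : Matrix (Fin d) (Fin d) ℝ) (ρ : (Fin d → ℝ) → ℝ)
    (Lρ Cb Ct : ℝ) : Prop where
  Lρ_pos : 0 < Lρ
  Cb_pos : 0 < Cb
  Ct_pos : 0 < Ct
  pos : ∀ y, 0 < ρ y
  lip : ∀ y y', |ρ y - ρ y'| ≤ Lρ * gammaNorm Γ (y - y')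
  bdd : ∀ y, ρ y ≤ Cb
  tail : ∀ y, Ct⁻¹ * Real.exp (-(1 / 2) * (gammaNorm Γ y) ^ 2) ≤ ρ y

/-- Wasserstein-1 distance in Kantorovich–Rubinstein dual form. -/
def W1 {X : Type*} [NormedAddCommGroup X] [MeasurableSpace X] (μ ν : Measure X) : ℝ :=
  sSup {r : ℝ | ∃ Φ : X → ℝ, LipschitzWith 1 Φ ∧ Φ 0 = 0 ∧
    r = (∫ u, Φ u ∂μ) - ∫ u, Φ u ∂ν}

/-- Normalization constant `Z(y) = ∫ ρ(y − L(ū)) dμ_prior(ū)`. -/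
def bayesZ {X : Type*} [MeasurableSpace X] {d : ℕ} (μp : Measure X)
    (ρ : (Fin d → ℝ) → ℝ) (L : X → Fin d → ℝ) (y : Fin d → ℝ) : ℝ :=
  ∫ u, ρ (y - L u) ∂μp

/-- The Bayesian posterior `μ^y = Z(y)⁻¹ ρ(y − L(·)) · μ_prior`. -/
def bayesPosterior {X : Type*} [MeasurableSpace X] {d : ℕ} (μp : Measure X)
    (ρ : (Fin d → ℝ) → ℝ) (L : X → Fin d → ℝ) (y : Fin d → ℝ) : Measure X :=
  μp.withDensity fun u => ENNReal.ofReal (ρ (y - L u) / bayesZ μp ρ L y)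

/- ### Auxiliary lemmas -/

lemma gammaNorm_nonneg' {d : ℕ} (Γ : Matrix (Fin d) (Fin d) ℝ) (y : Fin d → ℝ) :
    0 ≤ gammaNorm Γ y := Real.sqrt_nonneg _

lemma gammaNorm_sub_le' {d : ℕ} {Γ : Matrix (Fin d) (Fin d) ℝ} (hΓ : Γ.PosDef)
    (a b : Fin d → ℝ) : gammaNorm Γ (a - b) ≤ gammaNorm Γ a + gammaNorm Γ b := by
  have h := @norm_sub_le (Fin d → ℝ)
    (@SeminormedAddCommGroup.toSeminormedAddGroup _
      (@NormedAddCommGroup.toSeminormedAddCommGroup _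
        (Matrix.toNormedAddCommGroup Γ⁻¹ hΓ.inv))) a b
  have key : ∀ y : Fin d → ℝ, @norm _ (@SeminormedAddGroup.toNorm _
      (@SeminormedAddCommGroup.toSeminormedAddGroup _
        (@NormedAddCommGroup.toSeminormedAddCommGroup _
          (Matrix.toNormedAddCommGroup Γ⁻¹ hΓ.inv)))) y
      = gammaNorm Γ y := fun y => by
        change Real.sqrt (RCLike.re ((Γ⁻¹ *ᵥ y) ⬝ᵥ star y)) = _
        rw [gammaNorm, dotProduct_comm]; rfl
  rwa [key, key, key] at h

lemma gammaNorm_continuous' {d : ℕ} (Γ : Matrix (Fin d) (Fin d) ℝ) :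
    Continuous (gammaNorm Γ) := by
  have : Continuous fun y : Fin d → ℝ => y ⬝ᵥ (Γ⁻¹).mulVec y := by
    simp only [dotProduct, Matrix.mulVec]
    fun_prop
  exact Real.continuous_sqrt.comp this

set_option maxHeartbeats 1000000 in
/-- **Lemma 4.4: local Lipschitz dependence of the posterior density on the
measurement `y`, uniformly over `X`, with a constant depending only on the
noise density `ρ`.** -/
theorem posterior_density_lipschitz_in_y
    {X : Type*} [NormedAddCommGroup X] [NormedSpace ℝ X] [CompleteSpace X]
    [TopologicalSpace.SeparableSpace X] [MeasurableSpace X] [BorelSpace X]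
    {d : ℕ}
    (Γ : Matrix (Fin d) (Fin d) ℝ) (hΓ : Γ.PosDef)
    (ρ : (Fin d → ℝ) → ℝ) (Lρ Cb Ct : ℝ) (hρ : IsNoiseDensity Γ ρ Lρ Cb Ct) :
    ∃ C > 0, ∀ μp : Measure X, IsProbabilityMeasure μp →
      ∀ L : X → Fin d → ℝ, Measurable L →
        Integrable (fun u => (gammaNorm Γ (L u)) ^ 2) μp →
      ∀ y y' : Fin d → ℝ, ∀ u : X,
        |ρ (y - L u) / bayesZ μp ρ L y - ρ (y' - L u) / bayesZ μp ρ L y'|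
          ≤ C * gammaNorm Γ (y - y') *
            Real.exp ((gammaNorm Γ y) ^ 2 + (gammaNorm Γ y') ^ 2
              + 2 * ∫ v, (gammaNorm Γ (L v)) ^ 2 ∂μp) := by
  obtain ⟨hLρ, hCb, hCt, hpos, hlip, hbdd, htail⟩ := hρ
  refine ⟨Lρ * Ct * (1 + Cb * Ct), by positivity, ?_⟩
  intro μp hμp L hL hInt y y' u
  have gnn : ∀ z : Fin d → ℝ, 0 ≤ gammaNorm Γ z := gammaNorm_nonneg' Γ
  -- continuity of ρ
  have hρc : Continuous ρ := by
    rw [continuous_iff_continuousAt]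
    intro z
    rw [ContinuousAt, tendsto_iff_dist_tendsto_zero]
    have hb : Filter.Tendsto (fun x => Lρ * gammaNorm Γ (x - z)) (nhds z) (nhds 0) := by
      have hc : Continuous fun x : Fin d → ℝ => Lρ * gammaNorm Γ (x - z) :=
        continuous_const.mul ((gammaNorm_continuous' Γ).comp (continuous_id.sub continuous_const))
      have h0 : Lρ * gammaNorm Γ 0 = 0 := by simp [gammaNorm]
      simpa [h0] using hc.tendsto z
    refine squeeze_zero (fun x => dist_nonneg) (fun x => ?_) hb
    rw [Real.dist_eq]
    exact hlip x z
  set M := ∫ v, gammaNorm Γ (L v) ^ 2 ∂μp with hM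
  have hM0 : 0 ≤ M := integral_nonneg fun v => sq_nonneg _
  have meas : ∀ z : Fin d → ℝ, Measurable fun v : X => ρ (z - L v) :=
    fun z => hρc.measurable.comp (measurable_const.sub hL)
  have I1 : ∀ z : Fin d → ℝ, Integrable (fun v => ρ (z - L v)) μp := fun z =>
    (integrable_const Cb).mono' (meas z).aestronglyMeasurable
      (Filter.Eventually.of_forall fun v => by
        rw [Real.norm_eq_abs, abs_of_pos (hpos _)]; exact hbdd _)
  have sqb : ∀ (z : Fin d → ℝ) (v : X),
      gammaNorm Γ (z - L v) ^ 2 ≤ 2 * gammaNorm Γ z ^ 2 + 2 * gammaNorm Γ (L v) ^ 2 := by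
    intro z v
    have h1 := gammaNorm_sub_le' hΓ z (L v)
    have h2 : gammaNorm Γ (z - L v) ^ 2 ≤ (gammaNorm Γ z + gammaNorm Γ (L v)) ^ 2 :=
      pow_le_pow_left₀ (gnn _) h1 2
    nlinarith [sq_nonneg (gammaNorm Γ z - gammaNorm Γ (L v))]
  have measg : ∀ z : Fin d → ℝ, Measurable fun v : X => gammaNorm Γ (z - L v) ^ 2 :=
    fun z => ((gammaNorm_continuous' Γ).measurable.comp (measurable_const.sub hL)).pow_const 2
  have Ig0 : ∀ z : Fin d → ℝ, Integrable (fun v => gammaNorm Γ (z - L v) ^ 2) μp := by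
    intro z
    refine ((integrable_const (2 * gammaNorm Γ z ^ 2)).add (hInt.const_mul 2)).mono'
      (measg z).aestronglyMeasurable (Filter.Eventually.of_forall fun v => ?_)
    rw [Real.norm_eq_abs, abs_of_nonneg (sq_nonneg _)]
    exact sqb z v
  have Ig : ∀ z : Fin d → ℝ, Integrable (fun v => -(1 / 2) * gammaNorm Γ (z - L v) ^ 2) μp :=
    fun z => (Ig0 z).const_mul _
  -- lower bound on normalization constant (Jensen)
  have hZlow : ∀ z : Fin d → ℝ,
      Ct⁻¹ * Real.exp (-(gammaNorm Γ z ^ 2 + M)) ≤ bayesZ μp ρ L z := by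
    intro z
    have Iexp : Integrable (fun v => Real.exp (-(1 / 2) * gammaNorm Γ (z - L v) ^ 2)) μp := by
      refine (integrable_const 1).mono'
        (Real.continuous_exp.measurable.comp ((measg z).const_mul _)).aestronglyMeasurable
        (Filter.Eventually.of_forall fun v => ?_)
      rw [Real.norm_eq_abs, abs_of_pos (Real.exp_pos _)]
      have : -(1 / 2) * gammaNorm Γ (z - L v) ^ 2 ≤ 0 := by nlinarith [sq_nonneg (gammaNorm Γ (z - L v))]
      simpa using Real.exp_le_exp.mpr this
    have jensen : Real.exp (∫ v, -(1 / 2) * gammaNorm Γ (z - L v) ^ 2 ∂μp)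
        ≤ ∫ v, Real.exp (-(1 / 2) * gammaNorm Γ (z - L v) ^ 2) ∂μp :=
      convexOn_exp.map_integral_le Real.continuous_exp.continuousOn isClosed_univ
        (Filter.Eventually.of_forall fun v => Set.mem_univ _) (Ig z)
        (by exact Iexp)
    have hintf : -(gammaNorm Γ z ^ 2 + M) ≤ ∫ v, -(1 / 2) * gammaNorm Γ (z - L v) ^ 2 ∂μp := by
      have hle : ∫ v, -(gammaNorm Γ z ^ 2 + gammaNorm Γ (L v) ^ 2) ∂μp
          ≤ ∫ v, -(1 / 2) * gammaNorm Γ (z - L v) ^ 2 ∂μp :=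
        integral_mono (((integrable_const _).add hInt).neg) (Ig z)
          (fun v => by nlinarith [sqb z v])
      have heq : ∫ v, -(gammaNorm Γ z ^ 2 + gammaNorm Γ (L v) ^ 2) ∂μp
          = -(gammaNorm Γ z ^ 2 + M) := by
        rw [integral_neg, integral_add (integrable_const _) hInt, integral_const]
        simp [hM]
      linarith [hle, heq.ge]
    calc Ct⁻¹ * Real.exp (-(gammaNorm Γ z ^ 2 + M))
        ≤ Ct⁻¹ * ∫ v, Real.exp (-(1 / 2) * gammaNorm Γ (z - L v) ^ 2) ∂μp :=
          mul_le_mul_of_nonneg_left ((Real.exp_le_exp.mpr hintf).trans jensen)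
            (by positivity)
      _ = ∫ v, Ct⁻¹ * Real.exp (-(1 / 2) * gammaNorm Γ (z - L v) ^ 2) ∂μp :=
          (integral_const_mul _ _).symm
      _ ≤ ∫ v, ρ (z - L v) ∂μp :=
          integral_mono (Iexp.const_mul _) (I1 z) (fun v => htail _)
      _ = bayesZ μp ρ L z := rfl
  have hZpos : ∀ z : Fin d → ℝ, 0 < bayesZ μp ρ L z :=
    fun z => lt_of_lt_of_le (by positivity) (hZlow z)
  have hZinv : ∀ z : Fin d → ℝ,
      (bayesZ μp ρ L z)⁻¹ ≤ Ct * Real.exp (gammaNorm Γ z ^ 2 + M) := by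
    intro z
    have h2 : (bayesZ μp ρ L z)⁻¹ ≤ (Ct⁻¹ * Real.exp (-(gammaNorm Γ z ^ 2 + M)))⁻¹ :=
      inv_anti₀ (by positivity) (hZlow z)
    rwa [mul_inv, inv_inv, Real.exp_neg, inv_inv] at h2
  have hZdiff : |bayesZ μp ρ L y - bayesZ μp ρ L y'| ≤ Lρ * gammaNorm Γ (y - y') := by
    rw [show bayesZ μp ρ L y = ∫ v, ρ (y - L v) ∂μp from rfl,
      show bayesZ μp ρ L y' = ∫ v, ρ (y' - L v) ∂μp from rfl,
      ← integral_sub (I1 y) (I1 y')]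
    calc |∫ v, (ρ (y - L v) - ρ (y' - L v)) ∂μp|
        ≤ ∫ v, |ρ (y - L v) - ρ (y' - L v)| ∂μp := by
          simpa [Real.norm_eq_abs] using norm_integral_le_integral_norm (μ := μp)
            (fun v => ρ (y - L v) - ρ (y' - L v))
      _ ≤ ∫ _v, Lρ * gammaNorm Γ (y - y') ∂μp :=
          integral_mono ((I1 y).sub (I1 y')).abs (integrable_const _)
            (fun v => by simpa [sub_sub_sub_cancel_right] using hlip (y - L v) (y' - L v))
      _ = Lρ * gammaNorm Γ (y - y') := by simp
  -- final computation
  set Z := bayesZ μp ρ L y with hZ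
  set Z' := bayesZ μp ρ L y' with hZ'
  set a := ρ (y - L u) with ha
  set b := ρ (y' - L u) with hb
  have hZp := hZpos y
  have hZp' := hZpos y'
  have key : a / Z - b / Z' = (a - b) / Z + b * (Z' - Z) / (Z * Z') := by
    have hZ0 : Z ≠ 0 := hZp.ne'
    have hZ0' : Z' ≠ 0 := hZp'.ne'
    rw [div_add_div _ _ hZ0 (mul_ne_zero hZ0 hZ0'), div_sub_div _ _ hZ0 hZ0',
      div_eq_div_iff (mul_ne_zero hZ0 hZ0') (mul_ne_zero hZ0 (mul_ne_zero hZ0 hZ0'))]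
    ring
  have G0 : 0 ≤ gammaNorm Γ (y - y') := gnn _
  have hab : |a - b| ≤ Lρ * gammaNorm Γ (y - y') := by
    simpa [ha, hb, sub_sub_sub_cancel_right] using hlip (y - L u) (y' - L u)
  set Ey := Real.exp (gammaNorm Γ y ^ 2 + M) with hEy
  set Ey' := Real.exp (gammaNorm Γ y' ^ 2 + M) with hEy'
  have hEyp : 0 < Ey := Real.exp_pos _
  have hEyp' : 0 < Ey' := Real.exp_pos _
  have hE1 : 1 ≤ Ey' := Real.one_le_exp (add_nonneg (sq_nonneg _) hM0)
  have t1 : |(a - b) / Z| ≤ Lρ * gammaNorm Γ (y - y') * (Ct * Ey) := by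
    rw [abs_div, abs_of_pos hZp, div_eq_mul_inv]
    exact mul_le_mul hab (hZinv y) (inv_nonneg.2 hZp.le) (by positivity)
  have t2 : |b * (Z' - Z) / (Z * Z')| ≤ Cb * (Lρ * gammaNorm Γ (y - y')) * ((Ct * Ey) * (Ct * Ey')) := by
    rw [abs_div, abs_of_pos (mul_pos hZp hZp'), div_eq_mul_inv, abs_mul,
      abs_of_pos (hpos _), mul_inv]
    have hbb : b ≤ Cb := hbdd _
    have h1 : |Z' - Z| ≤ Lρ * gammaNorm Γ (y - y') := by
      rw [abs_sub_comm]; exact hZdiff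
    have h2 : Z⁻¹ * Z'⁻¹ ≤ (Ct * Ey) * (Ct * Ey') :=
      mul_le_mul (hZinv y) (hZinv y') (inv_nonneg.2 hZp'.le) (by positivity)
    calc b * |Z' - Z| * (Z⁻¹ * Z'⁻¹)
        ≤ (Cb * (Lρ * gammaNorm Γ (y - y'))) * ((Ct * Ey) * (Ct * Ey')) := by
          refine mul_le_mul ?_ h2 (by positivity) (by positivity)
          exact mul_le_mul hbb h1 (abs_nonneg _) hCb.le
      _ = Cb * (Lρ * gammaNorm Γ (y - y')) * ((Ct * Ey) * (Ct * Ey')) := rfl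
  have hEtot : Real.exp (gammaNorm Γ y ^ 2 + gammaNorm Γ y' ^ 2 + 2 * M) = Ey * Ey' := by
    rw [hEy, hEy', ← Real.exp_add]
    ring_nf
  calc |a / Z - b / Z'| = |(a - b) / Z + b * (Z' - Z) / (Z * Z')| := by rw [key]
    _ ≤ |(a - b) / Z| + |b * (Z' - Z) / (Z * Z')| := abs_add_le _ _
    _ ≤ Lρ * gammaNorm Γ (y - y') * (Ct * Ey)
        + Cb * (Lρ * gammaNorm Γ (y - y')) * ((Ct * Ey) * (Ct * Ey')) := add_le_add t1 t2
    _ ≤ Lρ * Ct * (1 + Cb * Ct) * gammaNorm Γ (y - y')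
        * Real.exp (gammaNorm Γ y ^ 2 + gammaNorm Γ y' ^ 2 + 2 * M) := by
        rw [hEtot]
        have hkey : 0 ≤ Lρ * Ct * gammaNorm Γ (y - y') * (Ey * (Ey' - 1)) := by
          have : 0 ≤ Ey' - 1 := by linarith
          positivity
        nlinarith [hkey]
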